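/- Assume conditions (NP1), (NP2) and (A1) hold. If p_n → ∞ and p_n h_n^{η_g} → 0 as n → ∞, then sup_{x∈Ω} | m_{p_n+1}(x) / m_{p_n}(x) − g(x) | → 0 as n → ∞. -/

import Mathlib

set_option maxHeartbeats 1000000

open intervalIntegral


open MeasureTheory Filter Set Metric ProbabilityTheory

noncomputable section

/-- The conditional moment `m_q(x) = E(Y^q | X = x)`, expressed through the conditional
survival function `F̄(·|x)` of `Y/g(x)` given `X = x`. -/
def mMom (d : ℕ) (g : (Fin d → ℝ) → ℝ) (Fbar : ℝ → (Fin d → ℝ) → ℝ)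
    (q : ℝ) (x : Fin d → ℝ) : ℝ :=
  g x ^ q * (q * ∫ y in (0:ℝ)..1, y ^ (q - 1) * Fbar y x)

lemma key_intgr (F : ℝ → ℝ) (hFmeas : Measurable F)
    (hFnn : ∀ y ∈ Icc (0:ℝ) 1, 0 ≤ F y) (hF1 : ∀ y ∈ Icc (0:ℝ) 1, F y ≤ 1)
    (r : ℝ) (hr : 0 ≤ r) :
    IntervalIntegrable (fun y => y ^ r * F y) volume 0 1 := by
  rw [intervalIntegrable_iff_integrableOn_Ioc_of_le (by norm_num)]
  apply Integrable.mono' (g := fun _ => (1:ℝ))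
    (integrableOn_const measure_Ioc_lt_top.ne)
  · exact (by fun_prop : Measurable fun y : ℝ => y ^ r * F y).aestronglyMeasurable
  · filter_upwards [ae_restrict_mem measurableSet_Ioc] with y hy
    have hyI : y ∈ Icc (0:ℝ) 1 := ⟨hy.1.le, hy.2⟩
    have hF0 : 0 ≤ F y := hFnn y hyI
    rw [Real.norm_eq_abs, abs_of_nonneg (mul_nonneg (Real.rpow_nonneg hyI.1 r) hF0)]
    calc y ^ r * F y ≤ 1 * 1 :=
          mul_le_mul (Real.rpow_le_one hyI.1 hyI.2 hr) (hF1 y hyI) hF0 zero_le_one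
      _ = 1 := one_mul 1

lemma key (F : ℝ → ℝ) (hFmeas : Measurable F) (hFanti : AntitoneOn F (Icc 0 1))
    (hFnn : ∀ y ∈ Icc (0:ℝ) 1, 0 ≤ F y) (hF0 : F 0 = 1)
    (q t s c gx M : ℝ) (hq : 2 ≤ q) (ht : 0 < t) (hts : t < s) (hs1 : s < 1)
    (hc : 0 < c) (hcF : c ≤ F s) (hg : 0 < gx) (hgM : gx ≤ M) :
    |gx ^ (q + 1) * ((q + 1) * ∫ y in (0:ℝ)..1, y ^ (q + 1 - 1) * F y) /
      (gx ^ q * (q * ∫ y in (0:ℝ)..1, y ^ (q - 1) * F y)) - gx|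
     ≤ M / q + M * (1 - t) + (M / c) * (t / s) ^ q := by
  have hq0 : (0:ℝ) < q := by linarith
  have hq1 : (0:ℝ) ≤ q - 1 := by linarith
  have ht1 : t < 1 := hts.trans hs1
  have hs0 : (0:ℝ) < s := ht.trans hts
  have hM : 0 < M := hg.trans_le hgM
  have hF1 : ∀ y ∈ Icc (0:ℝ) 1, F y ≤ 1 := by
    intro y hy
    calc F y ≤ F 0 := hFanti (left_mem_Icc.mpr zero_le_one) hy hy.1
      _ = 1 := hF0
  have hsub : ∀ a b : ℝ, a ∈ Icc (0:ℝ) 1 → b ∈ Icc (0:ℝ) 1 →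
      uIcc a b ⊆ uIcc (0:ℝ) 1 := by
    intro a b ha hb
    apply uIcc_subset_uIcc <;> simpa [uIcc_of_le (zero_le_one' ℝ)]
  set J := ∫ y in (0:ℝ)..1, y ^ (q - 1) * F y with hJdef
  set K := ∫ y in (0:ℝ)..1, y ^ (q + 1 - 1) * F y with hKdef
  have hKexp : (q + 1 - 1 : ℝ) = q := by ring
  have hintJ : IntervalIntegrable (fun y => y ^ (q-1) * F y) volume 0 1 :=
    key_intgr F hFmeas hFnn hF1 _ hq1
  have hintK : IntervalIntegrable (fun y => y ^ (q+1-1) * F y) volume 0 1 :=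
    key_intgr F hFmeas hFnn hF1 _ (by linarith)
  have hsI : s ∈ Icc (0:ℝ) 1 := ⟨hs0.le, hs1.le⟩
  have htI : t ∈ Icc (0:ℝ) 1 := ⟨ht.le, ht1.le⟩
  have h0I : (0:ℝ) ∈ Icc (0:ℝ) 1 := left_mem_Icc.mpr zero_le_one
  have h1I : (1:ℝ) ∈ Icc (0:ℝ) 1 := right_mem_Icc.mpr zero_le_one
  -- pointwise nonneg of integrands
  have hptnnJ : ∀ y ∈ Icc (0:ℝ) 1, 0 ≤ y ^ (q-1) * F y := fun y hy =>
    mul_nonneg (Real.rpow_nonneg hy.1 _) (hFnn y hy)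
  have hptnnK : ∀ y ∈ Icc (0:ℝ) 1, 0 ≤ y ^ (q+1-1) * F y := fun y hy =>
    mul_nonneg (Real.rpow_nonneg hy.1 _) (hFnn y hy)
  -- ∫₀ˣ y^(q-1) = x^q/q
  have hpow : ∀ x : ℝ, 0 ≤ x → ∫ y in (0:ℝ)..x, y ^ (q-1) = x ^ q / q := by
    intro x hx
    rw [integral_rpow (Or.inl (by linarith))]
    rw [Real.zero_rpow (by intro hcon; linarith : q - 1 + 1 ≠ 0)]
    rw [show q - 1 + 1 = q by ring]
    ring
  -- J lower bound: c * s ^ q / q ≤ J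
  have hJlb : c * s ^ q / q ≤ J := by
    have hsplit : (∫ y in (0:ℝ)..s, y ^ (q-1) * F y) + (∫ y in s..1, y ^ (q-1) * F y) = J :=
      integral_add_adjacent_intervals
        (hintJ.mono_set (hsub 0 s h0I hsI)) (hintJ.mono_set (hsub s 1 hsI h1I))
    have h2 : 0 ≤ ∫ y in s..1, y ^ (q-1) * F y := by
      apply integral_nonneg hs1.le
      intro y hy
      exact hptnnJ y ⟨hs0.le.trans hy.1, hy.2⟩
    have h1 : c * s ^ q / q ≤ ∫ y in (0:ℝ)..s, y ^ (q-1) * F y := by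
      have hmono : (∫ y in (0:ℝ)..s, y ^ (q-1) * c) ≤ ∫ y in (0:ℝ)..s, y ^ (q-1) * F y := by
        apply integral_mono_on hs0.le
          ((intervalIntegrable_rpow' (by linarith)).mul_const c)
          (hintJ.mono_set (hsub 0 s h0I hsI))
        intro y hy
        have hyI : y ∈ Icc (0:ℝ) 1 := ⟨hy.1, hy.2.trans hs1.le⟩
        have : c ≤ F y := hcF.trans (hFanti hyI hsI hy.2)
        exact mul_le_mul_of_nonneg_left this (Real.rpow_nonneg hy.1 _)
      calc c * s ^ q / q = (∫ y in (0:ℝ)..s, y ^ (q-1)) * c := by rw [hpow s hs0.le]; ring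
        _ = ∫ y in (0:ℝ)..s, y ^ (q-1) * c := by rw [intervalIntegral.integral_mul_const]
        _ ≤ _ := hmono
    linarith
  have hJpos : 0 < J := lt_of_lt_of_le (by positivity) hJlb
  -- K ≤ J
  have hKleJ : K ≤ J := by
    apply integral_mono_on zero_le_one hintK hintJ
    intro y hy
    rcases eq_or_lt_of_le hy.1 with h | h
    · rw [← h]
      rw [Real.zero_rpow (by intro hcon; linarith : q + 1 - 1 ≠ 0),
        Real.zero_rpow (by intro hcon; linarith : q - 1 ≠ 0)]
    · exact mul_le_mul_of_nonneg_right
        (Real.rpow_le_rpow_of_exponent_ge h hy.2 (by linarith)) (hFnn y hy)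
  have hKnn : 0 ≤ K := integral_nonneg zero_le_one hptnnK
  -- K lower bound: t * (J - t^q/q) ≤ K  (in the form  t*q*J - t^q ≤ q*K etc.)
  have hKlb : t * (J - t ^ q / q) ≤ K := by
    rcases le_or_gt (J - t ^ q / q) 0 with hneg | hposi
    · calc t * (J - t ^ q / q) ≤ 0 := mul_nonpos_of_nonneg_of_nonpos ht.le hneg
        _ ≤ K := hKnn
    -- main case
    have hsplitK : (∫ y in (0:ℝ)..t, y ^ (q+1-1) * F y) + (∫ y in t..1, y ^ (q+1-1) * F y) = K :=
      integral_add_adjacent_intervals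
        (hintK.mono_set (hsub 0 t h0I htI)) (hintK.mono_set (hsub t 1 htI h1I))
    have hK0t : 0 ≤ ∫ y in (0:ℝ)..t, y ^ (q+1-1) * F y := by
      apply integral_nonneg ht.le
      intro y hy
      exact hptnnK y ⟨hy.1, hy.2.trans ht1.le⟩
    have hsplitJ : (∫ y in (0:ℝ)..t, y ^ (q-1) * F y) + (∫ y in t..1, y ^ (q-1) * F y) = J :=
      integral_add_adjacent_intervals
        (hintJ.mono_set (hsub 0 t h0I htI)) (hintJ.mono_set (hsub t 1 htI h1I))
    have hJ0t : (∫ y in (0:ℝ)..t, y ^ (q-1) * F y) ≤ t ^ q / q := by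
      have : (∫ y in (0:ℝ)..t, y ^ (q-1) * F y) ≤ ∫ y in (0:ℝ)..t, y ^ (q-1) := by
        apply integral_mono_on ht.le (hintJ.mono_set (hsub 0 t h0I htI))
          (intervalIntegrable_rpow' (by linarith))
        intro y hy
        have hyI : y ∈ Icc (0:ℝ) 1 := ⟨hy.1, hy.2.trans ht1.le⟩
        calc y ^ (q-1) * F y ≤ y ^ (q-1) * 1 :=
              mul_le_mul_of_nonneg_left (hF1 y hyI) (Real.rpow_nonneg hy.1 _)
          _ = y ^ (q-1) := mul_one _
      rwa [hpow t ht.le] at this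
    have hKt1 : t * ∫ y in t..1, y ^ (q-1) * F y ≤ ∫ y in t..1, y ^ (q+1-1) * F y := by
      rw [← intervalIntegral.integral_const_mul]
      apply integral_mono_on ht1.le
        ((hintJ.mono_set (hsub t 1 htI h1I)).const_mul t)
        (hintK.mono_set (hsub t 1 htI h1I))
      intro y hy
      have hy0 : 0 < y := ht.trans_le hy.1
      have hyI : y ∈ Icc (0:ℝ) 1 := ⟨hy0.le, hy.2⟩
      have : y ^ (q+1-1) = y ^ (q-1) * y := by
        rw [show q + 1 - 1 = (q - 1) + 1 by ring, Real.rpow_add_one hy0.ne']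
      rw [this]
      calc t * (y ^ (q-1) * F y) = y ^ (q-1) * (t * F y) := by ring
        _ ≤ y ^ (q-1) * (y * F y) := mul_le_mul_of_nonneg_left
              (mul_le_mul_of_nonneg_right hy.1 (hFnn y hyI)) (Real.rpow_nonneg hy0.le _)
        _ = y ^ (q-1) * y * F y := by ring
    calc t * (J - t ^ q / q)
        ≤ t * ∫ y in t..1, y ^ (q-1) * F y := by
          apply mul_le_mul_of_nonneg_left _ ht.le
          linarith
      _ ≤ ∫ y in t..1, y ^ (q+1-1) * F y := hKt1
      _ ≤ K := by linarith
  -- now the algebra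
  have hgq : (0:ℝ) < gx ^ q := Real.rpow_pos_of_pos hg q
  have hgq1 : gx ^ (q+1) = gx ^ q * gx := Real.rpow_add_one hg.ne' q
  have hden : gx ^ q * (q * J) ≠ 0 := by positivity
  have hratio : gx ^ (q+1) * ((q+1) * K) / (gx ^ q * (q * J)) = gx * ((q+1) * K) / (q * J) := by
    rw [hgq1]; field_simp
  rw [hratio]
  have hqJ : 0 < q * J := by positivity
  -- upper bound: ratio - gx ≤ M / q
  have hub : gx * ((q+1) * K) / (q * J) - gx ≤ M / q := by
    have h1 : gx * ((q+1) * K) ≤ gx * ((q+1) * J) := by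
      apply mul_le_mul_of_nonneg_left _ hg.le
      exact mul_le_mul_of_nonneg_left hKleJ (by linarith)
    have h2 : gx * ((q+1) * K) / (q * J) ≤ gx * ((q+1) * J) / (q * J) := by gcongr
    have h3 : gx * ((q+1) * J) / (q * J) = gx * (q+1) / q := by
      field_simp
    have h4 : gx * (q+1) / q - gx = gx / q := by field_simp; ring
    have h5 : gx / q ≤ M / q := by gcongr
    linarith [h2.trans_eq h3]
  -- lower bound
  have hqJlb : c * s ^ q ≤ q * J := by
    have : q * (c * s ^ q / q) ≤ q * J := mul_le_mul_of_nonneg_left hJlb hq0.le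
    calc c * s ^ q = q * (c * s ^ q / q) := by field_simp
      _ ≤ q * J := this
  have hlb : gx - gx * ((q+1) * K) / (q * J) ≤ M * (1 - t) + (M / c) * (t / s) ^ q := by
    have htq : (0:ℝ) ≤ t ^ q := Real.rpow_nonneg ht.le q
    have h1 : t * (q * J) - t ^ q ≤ (q + 1) * K := by
      have e1 : q * (t * (J - t ^ q / q)) = t * (q * J) - t * t ^ q := by field_simp
      have e2 : q * (t * (J - t ^ q / q)) ≤ q * K := mul_le_mul_of_nonneg_left hKlb hq0.le
      have e3 : q * K ≤ (q + 1) * K := by nlinarith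
      have e4 : t * t ^ q ≤ t ^ q := by nlinarith
      linarith
    have hr1 : gx * (t * (q * J) - t ^ q) / (q * J) ≤ gx * ((q+1) * K) / (q * J) := by
      gcongr gx * ?_ / (q * J)
    have hr2 : gx * (t * (q * J) - t ^ q) / (q * J) = gx * t - gx * t ^ q / (q * J) := by
      field_simp
    have hr4 : gx * t ^ q / (q * J) ≤ M * t ^ q / (c * s ^ q) := by
      apply div_le_div₀ (by positivity) (mul_le_mul_of_nonneg_right hgM htq)
        (by positivity) hqJlb
    have hr5 : M * t ^ q / (c * s ^ q) = (M / c) * (t / s) ^ q := by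
      rw [Real.div_rpow ht.le hs0.le]
      field_simp
    have hkey : gx * t - gx * t ^ q / (q * J) ≤ gx * ((q+1) * K) / (q * J) := hr2.symm.trans_le hr1
    have hMt : gx * (1 - t) ≤ M * (1 - t) := mul_le_mul_of_nonneg_right hgM (by linarith)
    have e : gx * (1 - t) = gx - gx * t := by ring
    linarith [hkey, hr4, hr5, hMt, e]
  have hA : (0:ℝ) ≤ M / q := by positivity
  have hB : (0:ℝ) ≤ M * (1 - t) := mul_nonneg hM.le (by linarith)
  have hC : (0:ℝ) ≤ (M / c) * (t / s) ^ q := by positivity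
  rw [abs_le]
  constructor <;> linarith

theorem uniform_ratio_conditional_moments
    (d : ℕ) (hd : 0 < d)
    (E Ω : Set (Fin d → ℝ)) (hEclosed : IsClosed E)
    (hΩcomp : IsCompact Ω) (hΩE : Ω ⊆ interior E)
    (p h : ℕ → ℝ) (hppos : ∀ n, 0 < p n) (hhpos : ∀ n, 0 < h n)
    (hptop : Tendsto p atTop atTop) (hh0 : Tendsto h atTop (nhds 0))
    (f g : (Fin d → ℝ) → ℝ) (ηg : ℝ) (hηg : 0 < ηg)
    (hfcont : ContinuousOn f E) (hfpos : ∀ x ∈ E, 0 < f x)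
    (hgpos : ∀ x ∈ E, 0 < g x)
    (hgHolder : ∃ cg > 0, ∀ x ∈ E, ∀ y ∈ E, |g x - g y| ≤ cg * ‖x - y‖ ^ ηg)
    (hph : Tendsto (fun n => p n * h n ^ ηg) atTop (nhds 0))
    (Fbar : ℝ → (Fin d → ℝ) → ℝ)
    (hFanti : ∀ x ∈ E, AntitoneOn (fun y => Fbar y x) (Icc (0:ℝ) 1))
    (hFnn : ∀ x ∈ E, ∀ y ∈ Icc (0:ℝ) 1, 0 ≤ Fbar y x)
    (hFone : ∀ x ∈ E, Fbar 0 x = 1)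
    (hFpos : ∀ x ∈ E, ∀ y ∈ Ico (0:ℝ) 1, 0 < Fbar y x)
    (hFend : ∀ x ∈ E, ∀ y : ℝ, 1 ≤ y → Fbar y x = 0)
    (hFmeas : ∀ x ∈ E, Measurable fun y => Fbar y x)
    (y₀ : ℝ) (hy₀ : y₀ ∈ Ioo (0:ℝ) 1)
    (hNP2 : ∀ y ∈ Icc y₀ 1, ContinuousOn (fun x => Fbar y x) E)
    :
    Tendsto (fun n => ⨆ x : Ω,
      |mMom d g Fbar (p n + 1) (x : Fin d → ℝ) / mMom d g Fbar (p n) (x : Fin d → ℝ) -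
        g (x : Fin d → ℝ)|) atTop (nhds 0) := by
  rcases Ω.eq_empty_or_nonempty with rfl | ⟨x₀, hx₀⟩
  · simp only [Real.iSup_of_isEmpty]
    exact tendsto_const_nhds
  have hΩE' : Ω ⊆ E := fun x hx => interior_subset (hΩE hx)
  have hx₀E : x₀ ∈ E := hΩE' hx₀
  obtain ⟨cg, hcg, hHol⟩ := hgHolder
  obtain ⟨R, hR⟩ := hΩcomp.isBounded.subset_closedBall x₀
  have hR0 : 0 ≤ R := by
    have := hR hx₀
    simpa using this
  set M : ℝ := max 1 (g x₀ + cg * R ^ ηg) with hMdef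
  have hM1 : (1:ℝ) ≤ M := le_max_left _ _
  have hM : (0:ℝ) < M := lt_of_lt_of_le one_pos hM1
  have hgM : ∀ x ∈ Ω, g x ≤ M := by
    intro x hx
    have hxE : x ∈ E := hΩE' hx
    have h1 : |g x - g x₀| ≤ cg * ‖x - x₀‖ ^ ηg := hHol x hxE x₀ hx₀E
    have h2 : ‖x - x₀‖ ≤ R := by
      have := hR hx
      rwa [Metric.mem_closedBall, dist_eq_norm] at this
    have h3 : ‖x - x₀‖ ^ ηg ≤ R ^ ηg :=
      Real.rpow_le_rpow (norm_nonneg _) h2 hηg.le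
    have h4 : g x ≤ g x₀ + cg * R ^ ηg := by
      have := abs_le.mp h1
      nlinarith [this.2, mul_le_mul_of_nonneg_left h3 hcg.le]
    exact h4.trans (le_max_right _ _)
  rw [NormedAddCommGroup.tendsto_nhds_zero]
  intro ε hε
  -- choice of t and s
  set t : ℝ := max y₀ (1 - ε / (6 * M)) with htdef
  have ht0 : 0 < t := lt_of_lt_of_le hy₀.1 (le_max_left _ _)
  have ht1 : t < 1 := by
    apply max_lt hy₀.2
    have : 0 < ε / (6 * M) := by positivity
    linarith
  have hty₀ : y₀ ≤ t := le_max_left _ _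
  have h1t : 1 - t ≤ ε / (6 * M) := by
    have : 1 - ε / (6 * M) ≤ t := le_max_right _ _
    linarith
  set s : ℝ := (1 + t) / 2 with hsdef
  have hts : t < s := by rw [hsdef]; linarith
  have hs1 : s < 1 := by rw [hsdef]; linarith
  have hs0 : 0 < s := ht0.trans hts
  have hsy₀ : s ∈ Icc y₀ 1 := ⟨hty₀.trans hts.le, hs1.le⟩
  -- minimum of Fbar s on Ω
  obtain ⟨x₁, hx₁Ω, hx₁min⟩ := hΩcomp.exists_isMinOn ⟨x₀, hx₀⟩
    ((hNP2 s hsy₀).mono hΩE')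
  set c : ℝ := Fbar s x₁ with hcdef
  have hc : 0 < c := hFpos x₁ (hΩE' hx₁Ω) s ⟨hs0.le, hs1⟩
  -- eventual bounds
  have ev1 : ∀ᶠ n in atTop, 2 ≤ p n := hptop.eventually_ge_atTop 2
  have ev2 : ∀ᶠ n in atTop, M / p n < ε / 6 := by
    have : Tendsto (fun n => M / p n) atTop (nhds 0) :=
      tendsto_const_nhds.div_atTop hptop
    exact this.eventually (gt_mem_nhds (by positivity))
  have ev3 : ∀ᶠ n in atTop, (M / c) * (t / s) ^ p n < ε / 6 := by
    have hb0 : (-1:ℝ) < t / s := by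
      have : (0:ℝ) < t / s := by positivity
      linarith
    have hb1 : t / s < 1 := (div_lt_one hs0).mpr hts
    have h0 : Tendsto (fun n => (t / s) ^ p n) atTop (nhds 0) :=
      (tendsto_rpow_atTop_of_base_lt_one _ hb0 hb1).comp hptop
    have h1 : Tendsto (fun n => (M / c) * (t / s) ^ p n) atTop (nhds 0) := by
      have := h0.const_mul (M / c)
      simpa using this
    exact h1.eventually (gt_mem_nhds (by positivity))
  filter_upwards [ev1, ev2, ev3] with n h1 h2 h3
  set S : ℝ := ⨆ x : Ω,
      |mMom d g Fbar (p n + 1) (x : Fin d → ℝ) / mMom d g Fbar (p n) (x : Fin d → ℝ) -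
        g (x : Fin d → ℝ)| with hSdef
  have hSnn : 0 ≤ S := Real.iSup_nonneg fun x => abs_nonneg _
  rw [Real.norm_eq_abs, abs_of_nonneg hSnn]
  have hSle : S ≤ ε / 2 := by
    apply Real.iSup_le _ (by positivity)
    rintro ⟨x, hxΩ⟩
    have hxE : x ∈ E := hΩE' hxΩ
    have hgx : 0 < g x := hgpos x hxE
    have hcF : c ≤ Fbar s x := hx₁min hxΩ
    have hbd := key (fun y => Fbar y x) (hFmeas x hxE) (hFanti x hxE)
      (hFnn x hxE) (hFone x hxE) (p n) t s c (g x) M h1 ht0 hts hs1 hc hcF hgx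
      (hgM x hxΩ)
    simp only [mMom]
    refine le_trans hbd ?_
    have hMt : M * (1 - t) ≤ ε / 6 := by
      have := mul_le_mul_of_nonneg_left h1t hM.le
      have hM6 : M * (ε / (6 * M)) = ε / 6 := by field_simp
      linarith
    linarith
  linarith
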